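/- Let λ be a real number with λ < −1. Then there exists a real t > 0 such that (i·t, −i·t) is an attracting periodic cycle of period 2 for f_λ: f_λ(i·t) = −i·t, f_λ(−i·t) = i·t, and |deriv (f_λ^[2])(i·t)| < 1. -/

import Mathlib

open Complex Filter

/-- The tangent family: `f_λ(z) = λ · tan z`, with Mathlib's total complex tangent. -/
noncomputable def ftan (lam : ℂ) : ℂ → ℂ := fun z => lam * Complex.tan z

/-- Existence of a positive fixed point of `t ↦ μ tanh t` for `μ > 1`, written via
`sinh`/`cosh`. -/
lemma exists_pos_root (μ : ℝ) (hμ : 1 < μ) :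
    ∃ t : ℝ, 0 < t ∧ μ * Real.sinh t = t * Real.cosh t := by
  set ψ : ℝ → ℝ := fun t => μ * Real.sinh t - t * Real.cosh t with hψ
  have hψ0 : ψ 0 = 0 := by simp [hψ]
  -- ψ has derivative μ - 1 at 0
  have hderiv : HasDerivAt ψ (μ - 1) 0 := by
    have h1 : HasDerivAt (fun t : ℝ => μ * Real.sinh t) (μ * Real.cosh 0) 0 :=
      (Real.hasDerivAt_sinh 0).const_mul μ
    have h2 : HasDerivAt (fun t : ℝ => t * Real.cosh t)
        (1 * Real.cosh 0 + 0 * Real.sinh 0) 0 :=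
      (hasDerivAt_id 0).mul (Real.hasDerivAt_cosh 0)
    have := h1.sub h2
    simpa [hψ, Real.cosh_zero, Real.sinh_zero, Pi.sub_def] using this
  -- slope tends to μ - 1 > 0, so ψ is positive at some small t₀ > 0
  have hslope : Tendsto (slope ψ 0) (nhdsWithin 0 {(0:ℝ)}ᶜ) (nhds (μ - 1)) :=
    hasDerivAt_iff_tendsto_slope.1 hderiv
  have hslope' : Tendsto (slope ψ 0) (nhdsWithin 0 (Set.Ioi 0)) (nhds (μ - 1)) :=
    hslope.mono_left (nhdsWithin_mono _ (fun x hx => by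
      simp only [Set.mem_compl_iff, Set.mem_singleton_iff]
      exact ne_of_gt hx))
  have hpos : ∀ᶠ t in nhdsWithin (0:ℝ) (Set.Ioi 0), 0 < slope ψ 0 t :=
    hslope'.eventually (eventually_gt_nhds (by linarith : (0:ℝ) < μ - 1))
  have hsmall : ∀ᶠ t in nhdsWithin (0:ℝ) (Set.Ioi 0), t < μ :=
    eventually_nhdsWithin_of_eventually_nhds
      (Filter.Tendsto.eventually_lt_const (by linarith) tendsto_id)
  have hmem : ∀ᶠ t in nhdsWithin (0:ℝ) (Set.Ioi 0), t ∈ Set.Ioi (0:ℝ) :=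
    eventually_mem_nhdsWithin
  obtain ⟨t₀, h1, h2, h3⟩ := (hpos.and (hsmall.and hmem)).exists
  have ht₀ : 0 < t₀ := h3
  have hψt₀ : 0 < ψ t₀ := by
    have := h1
    rw [slope_def_field, hψ0, sub_zero, sub_zero, div_pos_iff] at this
    rcases this with ⟨ha, _⟩ | ⟨_, hb⟩
    · exact ha
    · linarith
  -- ψ μ < 0
  have hψμ : ψ μ < 0 := by
    have hs : Real.sinh μ < Real.cosh μ := Real.sinh_lt_cosh μ
    have : μ * Real.sinh μ < μ * Real.cosh μ :=
      mul_lt_mul_of_pos_left hs (by linarith)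
    simp only [hψ]; linarith
  -- IVT on [t₀, μ]
  have hcont : ContinuousOn ψ (Set.Icc t₀ μ) := by
    fun_prop
  have h0mem : (0:ℝ) ∈ Set.Icc (ψ μ) (ψ t₀) := ⟨le_of_lt hψμ, le_of_lt hψt₀⟩
  obtain ⟨c, hc, hψc⟩ := intermediate_value_Icc' (le_of_lt h2) hcont h0mem
  refine ⟨c, lt_of_lt_of_le ht₀ hc.1, ?_⟩
  have : μ * Real.sinh c - c * Real.cosh c = 0 := hψc
  linarith

/-- For real `λ < −1` there is `t > 0` such that `(it, −it)` is an attracting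
periodic cycle of period `2` for `f_λ`. -/
theorem attracting_two_cycle_real_lam (lam : ℝ) (h : lam < -1) :
    ∃ t : ℝ, 0 < t ∧
      ftan (lam : ℂ) (Complex.I * t) = -(Complex.I * t) ∧
      ftan (lam : ℂ) (-(Complex.I * t)) = Complex.I * t ∧
      ‖deriv ((ftan (lam : ℂ))^[2]) (Complex.I * t)‖ < 1 := by
  set μ : ℝ := -lam with hμdef
  have hμ : 1 < μ := by simp [hμdef]; linarith
  obtain ⟨t, ht, heq⟩ := exists_pos_root μ hμ
  have hcosh : 0 < Real.cosh t := Real.cosh_pos t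
  have hsinh : 0 < Real.sinh t := Real.sinh_pos_iff.2 ht
  -- the real fixed point relation for tanh
  have htanh : lam * Real.tanh t = -t := by
    rw [Real.tanh_eq_sinh_div_cosh]
    field_simp
    nlinarith [heq]
  -- complex tangent values
  have htanI : Complex.tan (Complex.I * (t:ℂ)) = (Real.tanh t : ℂ) * Complex.I := by
    rw [mul_comm, Complex.tan_mul_I, Complex.ofReal_tanh]
  have hf1 : ftan (lam : ℂ) (Complex.I * t) = -(Complex.I * t) := by
    rw [ftan, htanI]
    rw [show ((lam:ℂ) * ((Real.tanh t : ℂ) * Complex.I)) =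
        ((lam * Real.tanh t : ℝ) : ℂ) * Complex.I by push_cast; ring, htanh]
    push_cast; ring
  have hf2 : ftan (lam : ℂ) (-(Complex.I * t)) = Complex.I * t := by
    rw [ftan]
    simp only [Complex.tan_neg]
    rw [htanI]
    rw [show ((lam:ℂ) * -((Real.tanh t : ℂ) * Complex.I)) =
        -(((lam * Real.tanh t : ℝ) : ℂ) * Complex.I) by push_cast; ring, htanh]
    push_cast; ring
  -- cos at the cycle points
  have hcos1 : Complex.cos (Complex.I * t) = (Real.cosh t : ℂ) := by
    rw [mul_comm, Complex.cos_mul_I, Complex.ofReal_cosh]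
  have hcos1ne : Complex.cos (Complex.I * t) ≠ 0 := by
    rw [hcos1]
    exact_mod_cast ne_of_gt hcosh
  have hcos2 : Complex.cos (-(Complex.I * t)) = (Real.cosh t : ℂ) := by
    rw [Complex.cos_neg, hcos1]
  have hcos2ne : Complex.cos (-(Complex.I * t)) ≠ 0 := by
    rw [hcos2]
    exact_mod_cast ne_of_gt hcosh
  -- derivatives
  have hd1 : HasDerivAt (ftan (lam:ℂ)) ((lam:ℂ) * (1 / Complex.cos (Complex.I * t) ^ 2))
      (Complex.I * t) := (Complex.hasDerivAt_tan hcos1ne).const_mul _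
  have hd2 : HasDerivAt (ftan (lam:ℂ)) ((lam:ℂ) * (1 / Complex.cos (-(Complex.I * t)) ^ 2))
      (-(Complex.I * t)) := (Complex.hasDerivAt_tan hcos2ne).const_mul _
  have hd2' : HasDerivAt (ftan (lam:ℂ)) ((lam:ℂ) * (1 / Complex.cos (-(Complex.I * t)) ^ 2))
      (ftan (lam:ℂ) (Complex.I * t)) := by rw [hf1]; exact hd2
  have hcomp : HasDerivAt ((ftan (lam:ℂ)) ∘ (ftan (lam:ℂ)))
      (((lam:ℂ) * (1 / Complex.cos (-(Complex.I * t)) ^ 2)) *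
        ((lam:ℂ) * (1 / Complex.cos (Complex.I * t) ^ 2))) (Complex.I * t) :=
    hd2'.comp _ hd1
  have hiter : (ftan (lam:ℂ))^[2] = (ftan (lam:ℂ)) ∘ (ftan (lam:ℂ)) := by
    rw [Function.iterate_succ, Function.iterate_one]
  have hderiv : deriv ((ftan (lam:ℂ))^[2]) (Complex.I * t) =
      ((lam:ℂ) * (1 / Complex.cos (-(Complex.I * t)) ^ 2)) *
        ((lam:ℂ) * (1 / Complex.cos (Complex.I * t) ^ 2)) := by
    rw [hiter]; exact hcomp.deriv
  -- value of the multiplier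
  have hval : deriv ((ftan (lam:ℂ))^[2]) (Complex.I * t) =
      ((lam ^ 2 / Real.cosh t ^ 4 : ℝ) : ℂ) := by
    rw [hderiv, hcos1, hcos2]
    have : (Real.cosh t : ℂ) ≠ 0 := by exact_mod_cast ne_of_gt hcosh
    push_cast
    field_simp
  -- the key real inequality: μ < cosh² t, coming from t < sinh t · cosh t
  have hkey : t < Real.sinh t * Real.cosh t := by
    have h2t : 2 * t < Real.sinh (2 * t) := Real.self_lt_sinh_iff.2 (by linarith)
    rw [Real.sinh_two_mul] at h2t
    linarith
  have hμlt : μ < Real.cosh t ^ 2 := by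
    have : μ * Real.sinh t < Real.cosh t ^ 2 * Real.sinh t := by
      rw [heq]; nlinarith
    nlinarith
  have hfinal : lam ^ 2 / Real.cosh t ^ 4 < 1 := by
    rw [div_lt_one (by positivity)]
    have hμ0 : 0 < μ := by linarith
    have : μ ^ 2 < (Real.cosh t ^ 2) ^ 2 := by nlinarith
    have hlam2 : lam ^ 2 = μ ^ 2 := by rw [hμdef]; ring
    rw [hlam2]; nlinarith
  refine ⟨t, ht, hf1, hf2, ?_⟩
  rw [hval, Complex.norm_real, Real.norm_eq_abs, abs_of_pos (by have hc := Real.cosh_pos t; have hl : lam ≠ 0 := ne_of_lt (by linarith); positivity)]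
  exact hfinal
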